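/- Let F, F₁, F₂ be distribution functions on ℝ with characteristic functions f, f₁, f₂, and suppose F₁ = F ∗ F₂. Suppose f₁ and f₂ are nonvanishing and admit Lévy–Khinchine representations with pairs (γ₁, G₁) and (γ₂, G₂) respectively, where G₁, G₂ are nonnegative finite Borel measures. Then f(t) ≠ 0 for every t ∈ ℝ, f(t) = f₁(t)/f₂(t) for all t, and f admits the Lévy–Khinchine representation with pair (γ₁ − γ₂, G₁ − G₂), where G₁ − G₂ is a finite signed Borel measure. -/

import Mathlib

open MeasureTheory Complex Filter Finset

/-- Characteristic function of a Borel measure on ℝ. -/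
noncomputable def charFun (μ : MeasureTheory.Measure ℝ) (t : ℝ) : ℂ :=
  ∫ x, Complex.exp (Complex.I * t * x) ∂μ

/-- `g` is the distinguished logarithm of `f`: continuous, `g 0 = 0`, `exp ∘ g = f`. -/
def IsDistinguishedLog (g f : ℝ → ℂ) : Prop :=
  Continuous g ∧ g 0 = 0 ∧ ∀ t : ℝ, Complex.exp (g t) = f t

/-- Integral of a complex function against a finite signed measure, via the
Jordan decomposition. -/
noncomputable def sInt (G : MeasureTheory.SignedMeasure ℝ) (φ : ℝ → ℂ) : ℂ :=
  (∫ x, φ x ∂G.toJordanDecomposition.posPart) -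
    (∫ x, φ x ∂G.toJordanDecomposition.negPart)

/-- The Lévy–Khinchine integrand `K(t,x) = (e^{itx} - 1 - it sin x)(1+x²)/x²`,
with value `-t²/2` at `x = 0`. -/
noncomputable def Kfun (t x : ℝ) : ℂ :=
  if x = 0 then -(t ^ 2) / 2
  else (Complex.exp (Complex.I * t * x) - 1 - Complex.I * t * Real.sin x) * (1 + x ^ 2) / x ^ 2

/-- The kernel `C(h,x) = (cos(hx) - 1)(1+x²)/x²`, with value `-h²/2` at `x = 0`. -/
noncomputable def Cfun (h x : ℝ) : ℂ :=
  if x = 0 then -(h ^ 2) / 2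
  else ((Real.cos (h * x) - 1) * (1 + x ^ 2) / x ^ 2 : ℝ)

/-- `g` (the distinguished logarithm of `f`) is represented by the Lévy–Khinchine
formula with spectral pair `(γ, G)`. -/
def HasLK (g : ℝ → ℂ) (γ : ℝ) (G : MeasureTheory.SignedMeasure ℝ) : Prop :=
  ∀ t : ℝ, g t = Complex.I * t * γ + sInt G (Kfun t)

/-- Symmetric second finite difference of `g` with step `h`. -/
def delta2 (g : ℝ → ℂ) (h t : ℝ) : ℂ := g (t - h) + g (t + h) - 2 * g t

/-- `n`-fold convolution power of a measure on ℝ. -/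
noncomputable def convPow (ν : MeasureTheory.Measure ℝ) : ℕ → MeasureTheory.Measure ℝ
  | 0 => MeasureTheory.Measure.dirac 0
  | n + 1 => (convPow ν n).conv ν

/-- A probability measure `μ` on ℝ is infinitely divisible. -/
def IsInfDiv (μ : MeasureTheory.Measure ℝ) : Prop :=
  ∀ n : ℕ, 0 < n → ∃ ν : MeasureTheory.Measure ℝ,
    MeasureTheory.IsProbabilityMeasure ν ∧ convPow ν n = μ

/-- A probability measure `μ` on ℝ is rationally infinitely divisible:
`μ₁ = μ ∗ μ₂` for some infinitely divisible probability measures `μ₁, μ₂`. -/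
def IsRatInfDiv (μ : MeasureTheory.Measure ℝ) : Prop :=
  ∃ μ₁ μ₂ : MeasureTheory.Measure ℝ,
    MeasureTheory.IsProbabilityMeasure μ₁ ∧ MeasureTheory.IsProbabilityMeasure μ₂ ∧
    IsInfDiv μ₁ ∧ IsInfDiv μ₂ ∧ μ₁ = μ.conv μ₂


/-! ### Auxiliary lemmas -/

lemma aux_key (θ : ℝ) : ‖Complex.exp (Complex.I * θ) - 1 - Complex.I * θ‖ ≤ 3 * θ ^ 2 := by
  rcases le_or_gt |θ| 1 with h | h
  · have h2 : ‖Complex.I * θ‖ ≤ 1 := by simpa using h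
    have := Complex.norm_exp_sub_one_sub_id_le h2
    calc ‖Complex.exp (Complex.I * θ) - 1 - Complex.I * θ‖
        ≤ ‖Complex.I * θ‖ ^ 2 := this
      _ = θ ^ 2 := by simp [sq_abs]
      _ ≤ 3 * θ ^ 2 := by nlinarith
  · have hexp : ‖Complex.exp (Complex.I * θ)‖ = 1 := by
      rw [mul_comm]; exact Complex.norm_exp_ofReal_mul_I θ
    have h1 : ‖Complex.exp (Complex.I * θ) - 1 - Complex.I * θ‖ ≤
        ‖Complex.exp (Complex.I * θ)‖ + ‖(1 : ℂ)‖ + ‖Complex.I * (θ:ℂ)‖ := by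
      calc ‖Complex.exp (Complex.I * θ) - 1 - Complex.I * θ‖
          ≤ ‖Complex.exp (Complex.I * θ) - 1‖ + ‖Complex.I * (θ:ℂ)‖ := norm_sub_le _ _
        _ ≤ ‖Complex.exp (Complex.I * θ)‖ + ‖(1:ℂ)‖ + ‖Complex.I * (θ:ℂ)‖ := by
            have := norm_sub_le (Complex.exp (Complex.I * θ)) 1; linarith
    have h3 : ‖Complex.I * (θ:ℂ)‖ = |θ| := by simp
    have h4 : |θ| ^ 2 = θ ^ 2 := sq_abs θ
    rw [hexp, h3, norm_one] at h1
    nlinarith [abs_nonneg θ]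

lemma aux_sin_key (x : ℝ) : |x - Real.sin x| ≤ 3 * x ^ 2 := by
  have h2 := aux_key x
  have him : |(Complex.exp (Complex.I * x) - 1 - Complex.I * x).im| ≤
      ‖Complex.exp (Complex.I * x) - 1 - Complex.I * x‖ := Complex.abs_im_le_norm _
  have hval : (Complex.exp (Complex.I * x) - 1 - Complex.I * x).im = Real.sin x - x := by
    simp [mul_comm Complex.I (x:ℂ), Complex.exp_ofReal_mul_I_im]
  rw [hval, abs_sub_comm] at him
  linarith

lemma norm_Kfun_le (t x : ℝ) : ‖Kfun t x‖ ≤ 6 * t ^ 2 + 6 * |t| + 4 := by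
  unfold Kfun
  rcases eq_or_ne x 0 with hx | hx
  · rw [if_pos hx]
    have h : (-((t:ℂ) ^ 2) / 2) = ((-(t^2)/2 : ℝ) : ℂ) := by push_cast; ring
    rw [h, Complex.norm_real, Real.norm_eq_abs, abs_div, abs_neg,
      _root_.abs_of_nonneg (sq_nonneg t)]
    have h2 : |(2:ℝ)| = 2 := by norm_num
    rw [h2]
    nlinarith [abs_nonneg t, sq_nonneg t]
  · rw [if_neg hx]
    set u := Complex.exp (Complex.I * t * x) - 1 - Complex.I * t * Real.sin x with hu
    have hx2 : (0:ℝ) < x ^ 2 := by positivity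
    have hnorm : ‖u * (1 + (x:ℂ) ^ 2) / (x:ℂ) ^ 2‖ = ‖u‖ * (1 + x ^ 2) / x ^ 2 := by
      rw [norm_div, norm_mul]
      congr 1
      · congr 1
        have h1 : (1 + (x:ℂ)^2) = ((1 + x^2 : ℝ) : ℂ) := by push_cast; ring
        rw [h1, Complex.norm_real, Real.norm_eq_abs, _root_.abs_of_pos (by positivity)]
      · have h2 : ((x:ℂ)^2) = ((x^2 : ℝ) : ℂ) := by push_cast; ring
        rw [h2, Complex.norm_real, Real.norm_eq_abs, _root_.abs_of_pos hx2]
    rw [hnorm, div_le_iff₀ hx2]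
    have hun : 0 ≤ ‖u‖ := norm_nonneg u
    have habs_sin : |Real.sin x| ≤ 1 := abs_le.mpr ⟨Real.neg_one_le_sin x, Real.sin_le_one x⟩
    rcases le_or_gt |x| 1 with hle | hgt
    · have hdecomp : u = (Complex.exp (Complex.I * ((t*x : ℝ):ℂ)) - 1 - Complex.I * ((t*x:ℝ):ℂ))
          + Complex.I * ((t * (x - Real.sin x) : ℝ) : ℂ) := by
        rw [hu]
        have harg : Complex.I * t * x = Complex.I * ((t*x : ℝ):ℂ) := by push_cast; ring
        rw [harg]; push_cast; ring
      have hb1 := aux_key (t*x)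
      have hb2 : ‖Complex.I * ((t * (x - Real.sin x) : ℝ) : ℂ)‖ = |t * (x - Real.sin x)| := by
        rw [norm_mul, Complex.norm_I, one_mul, Complex.norm_real, Real.norm_eq_abs]
      have hb3 : |t * (x - Real.sin x)| ≤ |t| * (3 * x ^ 2) := by
        rw [abs_mul]
        exact mul_le_mul_of_nonneg_left (aux_sin_key x) (abs_nonneg t)
      have hub : ‖u‖ ≤ 3 * (t*x)^2 + |t| * (3 * x^2) := by
        rw [hdecomp]
        calc ‖_ + _‖ ≤ _ + _ := norm_add_le _ _
          _ ≤ 3 * (t*x)^2 + |t| * (3 * x^2) := by rw [hb2]; exact add_le_add hb1 hb3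
      have hx1 : x ^ 2 ≤ 1 := by nlinarith [_root_.sq_abs x, abs_nonneg x]
      nlinarith [abs_nonneg t, sq_nonneg t, mul_le_mul_of_nonneg_right hub (le_of_lt hx2),
        sq_nonneg (t*x), mul_pow t x 2]
    · have hub : ‖u‖ ≤ 2 + |t| := by
        rw [hu]
        have e1 : ‖Complex.exp (Complex.I * t * x)‖ = 1 := by
          have harg : Complex.I * t * x = ((t*x : ℝ):ℂ) * Complex.I := by push_cast; ring
          rw [harg]; exact Complex.norm_exp_ofReal_mul_I _
        have e2 : ‖Complex.I * (t:ℂ) * ((Real.sin x : ℝ) : ℂ)‖ = |t| * |Real.sin x| := by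
          rw [norm_mul, norm_mul, Complex.norm_I, one_mul, Complex.norm_real,
            Complex.norm_real, Real.norm_eq_abs, Real.norm_eq_abs]
        calc ‖Complex.exp (Complex.I * t * x) - 1 - Complex.I * t * Real.sin x‖
            ≤ ‖Complex.exp (Complex.I * t * x) - 1‖ + ‖Complex.I * (t:ℂ) * (Real.sin x : ℝ)‖ :=
              norm_sub_le _ _
          _ ≤ ‖Complex.exp (Complex.I * t * x)‖ + ‖(1:ℂ)‖
              + ‖Complex.I * (t:ℂ) * ((Real.sin x:ℝ):ℂ)‖ := by
              have := norm_sub_le (Complex.exp (Complex.I * t * x)) 1; push_cast; linarith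
          _ ≤ 2 + |t| := by
              rw [e1, e2, norm_one]
              nlinarith [abs_nonneg t]
      have hx1 : 1 ≤ x ^ 2 := by nlinarith [_root_.sq_abs x]
      nlinarith [abs_nonneg t, sq_nonneg t, mul_le_mul_of_nonneg_right hub (le_of_lt hx2)]

lemma Kfun_measurable (t : ℝ) : Measurable (Kfun t) := by
  unfold Kfun
  apply Measurable.ite (MeasurableSet.singleton 0 : MeasurableSet {x : ℝ | x = 0})
  · exact measurable_const
  · fun_prop

lemma Kfun_integrable (t : ℝ) (ν : MeasureTheory.Measure ℝ) [IsFiniteMeasure ν] :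
    Integrable (Kfun t) ν :=
  (integrable_const (6 * t ^ 2 + 6 * |t| + 4)).mono'
    (Kfun_measurable t).aestronglyMeasurable (ae_of_all _ (norm_Kfun_le t))

lemma sInt_sub (G₁ G₂ : SignedMeasure ℝ) (φ : ℝ → ℂ)
    (hint : ∀ (ν : Measure ℝ), IsFiniteMeasure ν → Integrable φ ν) :
    sInt (G₁ - G₂) φ = sInt G₁ φ - sInt G₂ φ := by
  set Ps := (G₁ - G₂).toJordanDecomposition.posPart with hPs
  set Ns := (G₁ - G₂).toJordanDecomposition.negPart with hNs
  set P1 := G₁.toJordanDecomposition.posPart with hP1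
  set N1 := G₁.toJordanDecomposition.negPart with hN1
  set P2 := G₂.toJordanDecomposition.posPart with hP2
  set N2 := G₂.toJordanDecomposition.negPart with hN2
  have hJ : ∀ (s : SignedMeasure ℝ) (E : Set ℝ), MeasurableSet E →
      s E = (s.toJordanDecomposition.posPart E).toReal -
        (s.toJordanDecomposition.negPart E).toReal := by
    intro s E hE
    conv_lhs => rw [← s.toSignedMeasure_toJordanDecomposition]
    rw [JordanDecomposition.toSignedMeasure, Measure.toSignedMeasure_sub_apply hE]
    rfl
  have hmeas : Ps + (N1 + P2) = Ns + (P1 + N2) := by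
    ext E hE
    have h1 := hJ (G₁ - G₂) E hE
    have h2 := hJ G₁ E hE
    have h3 := hJ G₂ E hE
    have h4 : (G₁ - G₂) E = G₁ E - G₂ E := VectorMeasure.sub_apply _ _ _
    have f1 : Ps E ≠ ⊤ := measure_ne_top _ E
    have f2 : Ns E ≠ ⊤ := measure_ne_top _ E
    have f3 : P1 E ≠ ⊤ := measure_ne_top _ E
    have f4 : N1 E ≠ ⊤ := measure_ne_top _ E
    have f5 : P2 E ≠ ⊤ := measure_ne_top _ E
    have f6 : N2 E ≠ ⊤ := measure_ne_top _ E
    rw [Measure.add_apply, Measure.add_apply, Measure.add_apply, Measure.add_apply]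
    apply (ENNReal.toReal_eq_toReal_iff' (by simp [ENNReal.add_ne_top, f1, f4, f5])
      (by simp [ENNReal.add_ne_top, f2, f3, f6])).mp
    rw [ENNReal.toReal_add f1 (ENNReal.add_ne_top.mpr ⟨f4, f5⟩), ENNReal.toReal_add f4 f5,
      ENNReal.toReal_add f2 (ENNReal.add_ne_top.mpr ⟨f3, f6⟩), ENNReal.toReal_add f3 f6]
    rw [h4, h2, h3] at h1
    linarith
  have i1 := hint Ps inferInstance
  have i2 := hint Ns inferInstance
  have i3 := hint P1 inferInstance
  have i4 := hint N1 inferInstance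
  have i5 := hint P2 inferInstance
  have i6 := hint N2 inferInstance
  have hI : (∫ x, φ x ∂Ps) + ((∫ x, φ x ∂N1) + (∫ x, φ x ∂P2)) =
      (∫ x, φ x ∂Ns) + ((∫ x, φ x ∂P1) + (∫ x, φ x ∂N2)) := by
    rw [← integral_add_measure i4 i5, ← integral_add_measure i1 (i4.add_measure i5),
      ← integral_add_measure i3 i6, ← integral_add_measure i2 (i3.add_measure i6), hmeas]
  unfold sInt
  rw [← hPs, ← hNs, ← hP1, ← hN1, ← hP2, ← hN2]
  linear_combination hI

lemma charFun_conv_eq (ν₁ ν₂ : MeasureTheory.Measure ℝ) [IsProbabilityMeasure ν₁]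
    [IsProbabilityMeasure ν₂] (t : ℝ) :
    _root_.charFun (ν₁.conv ν₂) t = _root_.charFun ν₁ t * _root_.charFun ν₂ t := by
  unfold _root_.charFun
  rw [Measure.conv, integral_map (by fun_prop) (Continuous.aestronglyMeasurable (by fun_prop))]
  have h : ∀ p : ℝ × ℝ, Complex.exp (Complex.I * t * (p.1 + p.2 : ℝ)) =
      Complex.exp (Complex.I * t * p.1) * Complex.exp (Complex.I * t * p.2) := by
    intro p; rw [← Complex.exp_add]; push_cast; ring_nf
  simp_rw [h]
  exact integral_prod_mul (μ := ν₁) (ν := ν₂) (L := ℂ)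
    (fun x => Complex.exp (Complex.I * t * x)) (fun y => Complex.exp (Complex.I * t * y))


/-- if `μ₁ = μ ∗ μ₂` and `f₁, f₂` are nonvanishing with Lévy–Khinchine
representations `(γ₁, G₁)`, `(γ₂, G₂)` (with `G₁, G₂` nonnegative), then `f` is
nonvanishing, `f = f₁ / f₂`, and `f` admits the Lévy–Khinchine representation with
pair `(γ₁ - γ₂, G₁ - G₂)`. -/
theorem hasLK_of_conv_quotient (μ μ₁ μ₂ : MeasureTheory.Measure ℝ)
    [MeasureTheory.IsProbabilityMeasure μ] [MeasureTheory.IsProbabilityMeasure μ₁]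
    [MeasureTheory.IsProbabilityMeasure μ₂]
    (hconv : μ₁ = μ.conv μ₂)
    (hf₁ : ∀ t : ℝ, _root_.charFun μ₁ t ≠ 0) (hf₂ : ∀ t : ℝ, _root_.charFun μ₂ t ≠ 0)
    (g₁ g₂ : ℝ → ℂ)
    (hg₁ : IsDistinguishedLog g₁ (_root_.charFun μ₁)) (hg₂ : IsDistinguishedLog g₂ (_root_.charFun μ₂))
    (γ₁ γ₂ : ℝ) (G₁ G₂ : MeasureTheory.SignedMeasure ℝ)
    (hG₁pos : 0 ≤ G₁) (hG₂pos : 0 ≤ G₂)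
    (hLK₁ : HasLK g₁ γ₁ G₁) (hLK₂ : HasLK g₂ γ₂ G₂) :
    (∀ t : ℝ, _root_.charFun μ t ≠ 0) ∧
    (∀ t : ℝ, _root_.charFun μ t = _root_.charFun μ₁ t / _root_.charFun μ₂ t) ∧
    (∃ g : ℝ → ℂ, IsDistinguishedLog g (_root_.charFun μ) ∧ HasLK g (γ₁ - γ₂) (G₁ - G₂)) := by
  have hmul : ∀ t : ℝ, _root_.charFun μ₁ t = _root_.charFun μ t * _root_.charFun μ₂ t := by
    intro t; rw [hconv]; exact charFun_conv_eq μ μ₂ t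
  have hne : ∀ t : ℝ, _root_.charFun μ t ≠ 0 := by
    intro t h
    exact hf₁ t (by rw [hmul t, h, zero_mul])
  have hdiv : ∀ t : ℝ, _root_.charFun μ t = _root_.charFun μ₁ t / _root_.charFun μ₂ t := by
    intro t
    rw [hmul t, mul_div_assoc, div_self (hf₂ t), mul_one]
  obtain ⟨hc₁, hz₁, he₁⟩ := hg₁
  obtain ⟨hc₂, hz₂, he₂⟩ := hg₂
  refine ⟨hne, hdiv, fun t => g₁ t - g₂ t, ⟨hc₁.sub hc₂, by show g₁ 0 - g₂ 0 = 0; rw [hz₁, hz₂, sub_zero], fun t => ?_⟩,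
    fun t => ?_⟩
  · show Complex.exp (g₁ t - g₂ t) = _
    rw [Complex.exp_sub, he₁ t, he₂ t, ← hdiv t]
  · show g₁ t - g₂ t = _
    have e1 := hLK₁ t
    have e2 := hLK₂ t
    have hs := sInt_sub G₁ G₂ (Kfun t) (fun ν hν => by
      haveI := hν; exact Kfun_integrable t ν)
    rw [hs, e1, e2]
    push_cast
    ring
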